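/- Let T₁, T₂, T₁', λ₁, λ₂ > 0 with T₂ ≥ T₁ and λ₁/T₁ = λ₂/T₂. Define f₁(m) = −λ₁ + λ₂ + λ₁ e^{−m T₁'/T₁} − λ₂ e^{−m T₁'/T₂}. Then f₁(m) ≥ 0 for every m ≥ 0. -/

import Mathlib

open Real

lemma key_antitone {a b : ℝ} (ha : 0 < a) (hab : a ≤ b) :
    a * (1 - Real.exp (-b)) ≤ b * (1 - Real.exp (-a)) := by
  have hb : 0 < b := ha.trans_le hab
  set h : ℝ → ℝ := fun t => (1 - Real.exp (-t)) / t with hh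
  have hderiv : ∀ t ∈ Set.Ioo a b, HasDerivAt h
      ((Real.exp (-t) * t - (1 - Real.exp (-t))) / t ^ 2) t := by
    intro t ht
    have ht0 : t ≠ 0 := ne_of_gt (ha.trans ht.1)
    have h1 : HasDerivAt (fun t : ℝ => 1 - Real.exp (-t)) (Real.exp (-t)) t := by
      have := (Real.hasDerivAt_exp (-t)).comp t (hasDerivAt_neg t)
      exact ((hasDerivAt_const t (1:ℝ)).sub this).congr_deriv (by simp)
    have h2 : HasDerivAt (fun t : ℝ => t) 1 t := hasDerivAt_id t
    have := h1.div h2 ht0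
    exact this.congr_deriv (by ring)
  have hanti : AntitoneOn h (Set.Icc a b) := by
    apply antitoneOn_of_deriv_nonpos (convex_Icc a b)
    · apply ContinuousOn.div
      · fun_prop
      · fun_prop
      · intro t ht
        exact ne_of_gt (ha.trans_le ht.1)
    · intro t ht
      rw [interior_Icc] at ht
      exact (hderiv t ht).differentiableAt.differentiableWithinAt
    · intro t ht
      rw [interior_Icc] at ht
      rw [(hderiv t ht).deriv]
      have ht0 : 0 < t := ha.trans ht.1
      apply div_nonpos_of_nonpos_of_nonneg _ (sq_nonneg t)
      have h3 : t + 1 ≤ Real.exp t := by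
        have := Real.add_one_le_exp t
        linarith
      have h4 : Real.exp (-t) * (t + 1) ≤ 1 := by
        calc Real.exp (-t) * (t + 1) ≤ Real.exp (-t) * Real.exp t :=
              mul_le_mul_of_nonneg_left h3 (Real.exp_pos _).le
          _ = 1 := by rw [← Real.exp_add]; simp
      nlinarith
  have := hanti (Set.left_mem_Icc.2 hab) (Set.right_mem_Icc.2 hab) hab
  rw [hh] at this
  simp only at this
  rw [div_le_div_iff₀ hb ha] at this
  linarith [this]

/-- Let `T₁, T₂, T₁', λ₁, λ₂ > 0` with `T₂ ≥ T₁` and `λ₁/T₁ = λ₂/T₂`. Then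
`f₁(m) = −λ₁ + λ₂ + λ₁ e^{−m T₁'/T₁} − λ₂ e^{−m T₁'/T₂}` is nonnegative for every `m ≥ 0`. -/
theorem f₁_nonneg (T₁ T₂ T₁' lam₁ lam₂ : ℝ)
    (hT₁ : 0 < T₁) (hT₂ : 0 < T₂) (hT₁' : 0 < T₁') (hlam₁ : 0 < lam₁) (hlam₂ : 0 < lam₂)
    (hT : T₁ ≤ T₂) (hrate : lam₁ / T₁ = lam₂ / T₂)
    (f₁ : ℝ → ℝ)
    (hf₁ : ∀ m, f₁ m = -lam₁ + lam₂ + lam₁ * Real.exp (-m * (T₁' / T₁)) -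
      lam₂ * Real.exp (-m * (T₁' / T₂))) :
    ∀ m : ℝ, 0 ≤ m → 0 ≤ f₁ m := by
  intro m hm
  rw [hf₁]
  have hcr : lam₁ * T₂ = lam₂ * T₁ := by
    field_simp at hrate; linarith
  rcases eq_or_lt_of_le hm with rfl | hm
  · simp
  · set x := m * T₁' with hx
    have hx0 : 0 < x := mul_pos hm hT₁'
    have ha : (0:ℝ) < x / T₂ := div_pos hx0 hT₂
    have hab : x / T₂ ≤ x / T₁ := div_le_div_of_nonneg_left hx0.le hT₁ hT
    have hkey := key_antitone ha hab
    have e1 : -(x / T₁) = -m * (T₁' / T₁) := by field_simp; rfl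
    have e2 : -(x / T₂) = -m * (T₁' / T₂) := by field_simp; rfl
    rw [e1, e2] at hkey
    -- hkey : x/T₂ * (1 - exp(-m*(T₁'/T₁))) ≤ x/T₁ * (1 - exp(-m*(T₁'/T₂)))
    have hkey' : T₁ * (1 - Real.exp (-m * (T₁' / T₁))) ≤
        T₂ * (1 - Real.exp (-m * (T₁' / T₂))) := by
      have h := hkey
      rw [div_mul_eq_mul_div, div_mul_eq_mul_div, div_le_div_iff₀ hT₂ hT₁] at h
      have h2 : x * (T₁ * (1 - Real.exp (-m * (T₁' / T₁)))) ≤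
          x * (T₂ * (1 - Real.exp (-m * (T₁' / T₂)))) := by nlinarith [h]
      exact le_of_mul_le_mul_left h2 hx0
    nlinarith [mul_le_mul_of_nonneg_left hkey' hlam₂.le, hcr,
      mul_pos hlam₁ hT₂, Real.exp_pos (-m * (T₁' / T₁)), Real.exp_pos (-m * (T₁' / T₂))]
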